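/- Let h ∈ C²[0,T], 0 < α < 1, and let Π₁h denote the piecewise linear interpolant of h at nodes t_j = jΔt. Then for the first step, | (1/(1-α)) ∫_0^{t_1} (h - Π₁h)'(s) exp(-α(t_1 - s)/(1-α)) ds | ≤ (α/(8(1-α)²)) · max_{t∈[0,T]} |h''(t)| · (Δt)³. -/

import Mathlib

open Real intervalIntegral MeasureTheory

theorem first_step_interpolation_error (T α Δt M : ℝ)
    (hα0 : 0 < α) (hα1 : α < 1) (hΔt : 0 < Δt) (hΔtT : Δt ≤ T)
    (h : ℝ → ℝ) (hh : ContDiff ℝ 2 h)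
    (hM : ∀ t ∈ Set.Icc (0:ℝ) T, |deriv (deriv h) t| ≤ M) :
    |(1 / (1 - α)) *
        ∫ s in (0:ℝ)..Δt,
          deriv (fun t => h t - (h 0 + (h Δt - h 0) / Δt * t)) s *
            Real.exp (-α * (Δt - s) / (1 - α))| ≤
      α / (8 * (1 - α) ^ 2) * M * Δt ^ 3 := by
  have h1α : (0:ℝ) < 1 - α := by linarith
  set f := deriv (deriv h) with hf_def
  -- smoothness facts
  have hh2 : ContDiff ℝ ((1 : WithTop ℕ∞) + 1) h := by
    have e : ((1 : WithTop ℕ∞) + 1) = 2 := by norm_num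
    rw [e]; exact hh
  have hd1 : Differentiable ℝ h := (contDiff_succ_iff_deriv.mp hh2).1
  have hc1 : ContDiff ℝ (1 : WithTop ℕ∞) (deriv h) := (contDiff_succ_iff_deriv.mp hh2).2.2
  have hd2 : Differentiable ℝ (deriv h) := (contDiff_one_iff_deriv.mp hc1).1
  have hfc : Continuous f := (contDiff_one_iff_deriv.mp hc1).2
  have hM0 : 0 ≤ M := le_trans (abs_nonneg _) (hM 0 ⟨le_refl _, le_trans hΔt.le hΔtT⟩)
  set m := (h Δt - h 0) / Δt with hm_def
  set g := fun s : ℝ => h s - (h 0 + m * s) with hg_def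
  have hg' : ∀ s : ℝ, HasDerivAt g (deriv h s - m) s := by
    intro s
    exact ((hd1 s).hasDerivAt).sub
      (((hasDerivAt_id s).const_mul m).const_add (h 0) |>.congr_deriv (by ring))
  -- Taylor with integral remainder
  set R := fun x : ℝ => x * (∫ u in (0:ℝ)..x, f u) - ∫ u in (0:ℝ)..x, u * f u with hR_def
  have hfi : ∀ a b : ℝ, IntervalIntegrable f volume a b := fun a b => hfc.intervalIntegrable a b
  have hufi : ∀ a b : ℝ, IntervalIntegrable (fun u => u * f u) volume a b :=
    fun a b => (continuous_id.mul hfc).intervalIntegrable a b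
  have hInt : ∀ x : ℝ, HasDerivAt (fun y => ∫ u in (0:ℝ)..y, f u) (f x) x := by
    intro x
    exact intervalIntegral.integral_hasDerivAt_right (hfi 0 x)
      (hfc.stronglyMeasurableAtFilter _ _) hfc.continuousAt
  have hIntu : ∀ x : ℝ, HasDerivAt (fun y => ∫ u in (0:ℝ)..y, u * f u) (x * f x) x := by
    intro x
    exact intervalIntegral.integral_hasDerivAt_right (hufi 0 x)
      ((continuous_id.mul hfc).stronglyMeasurableAtFilter _ _) (continuous_id.mul hfc).continuousAt
  have hFTC1 : ∀ x : ℝ, ∫ u in (0:ℝ)..x, f u = deriv h x - deriv h 0 := by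
    intro x
    exact intervalIntegral.integral_deriv_eq_sub (fun u _ => hd2 u) (hfi 0 x)
  have hTaylor : ∀ x : ℝ, h x = h 0 + x * deriv h 0 + R x := by
    have key : ∀ x : ℝ, h x - (h 0 + x * deriv h 0 + R x) = h 0 - (h 0 + 0 * deriv h 0 + R 0) := by
      have hF : ∀ y : ℝ, HasDerivAt (fun x => h x - (h 0 + x * deriv h 0 + R x)) 0 y := by
        intro y
        have hRd : HasDerivAt R (∫ u in (0:ℝ)..y, f u) y := by
          have := ((hasDerivAt_id y).mul (hInt y)).sub (hIntu y)
          exact this.congr_deriv (by simp)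
        have h2 : HasDerivAt (fun x => h 0 + x * deriv h 0 + R x)
            (deriv h 0 + ∫ u in (0:ℝ)..y, f u) y :=
          ((((hasDerivAt_id y).mul_const (deriv h 0)).const_add (h 0)).add hRd).congr_deriv
            (by ring)
        have h3 := ((hd1 y).hasDerivAt).sub h2
        have h4 := h3.congr_deriv
          (show deriv h y - (deriv h 0 + ∫ u in (0:ℝ)..y, f u) = 0 by rw [hFTC1 y]; ring)
        exact h4
      have hdiff : Differentiable ℝ (fun x => h x - (h 0 + x * deriv h 0 + R x)) :=
        fun y => (hF y).differentiableAt
      intro x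
      exact is_const_of_deriv_eq_zero hdiff (fun y => (hF y).deriv) x 0
    intro x
    have hR0 : R 0 = 0 := by simp [hR_def]
    have hx := key x
    rw [hR0] at hx
    linarith
  -- pointwise bound on g
  have hgbound : ∀ s ∈ Set.Icc (0:ℝ) Δt, |g s| ≤ M * Δt ^ 2 / 8 := by
    intro s hs
    obtain ⟨hs0, hsΔ⟩ := hs
    have hMle : ∀ u ∈ Set.Icc (0:ℝ) Δt, |f u| ≤ M := fun u hu =>
      hM u ⟨hu.1, le_trans hu.2 hΔtT⟩
    have hsplit : (∫ u in (0:ℝ)..Δt, f u) = (∫ u in (0:ℝ)..s, f u) + ∫ u in s..Δt, f u :=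
      (intervalIntegral.integral_add_adjacent_intervals (hfi 0 s) (hfi s Δt)).symm
    have husplit : (∫ u in (0:ℝ)..Δt, u * f u)
        = (∫ u in (0:ℝ)..s, u * f u) + ∫ u in s..Δt, u * f u :=
      (intervalIntegral.integral_add_adjacent_intervals (hufi 0 s) (hufi s Δt)).symm
    have htail : (∫ u in s..Δt, (u - Δt) * f u)
        = (∫ u in s..Δt, u * f u) - Δt * ∫ u in s..Δt, f u := by
      rw [← intervalIntegral.integral_const_mul,
        ← intervalIntegral.integral_sub (hufi s Δt) ((hfi s Δt).const_mul Δt)]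
      congr 1; ext u; ring
    have hgrep : g s = -((Δt - s)/Δt) * (∫ u in (0:ℝ)..s, u * f u)
        + (s/Δt) * ∫ u in s..Δt, (u - Δt) * f u := by
      have h1 : g s = R s - (s/Δt) * R Δt := by
        show h s - (h 0 + m * s) = R s - (s/Δt) * R Δt
        rw [hm_def, hTaylor s, hTaylor Δt]
        field_simp
        ring
      rw [h1, hR_def, htail]
      simp only
      rw [hsplit, husplit]
      field_simp
      ring
    -- bound the two integrals
    have B1 : |∫ u in (0:ℝ)..s, u * f u| ≤ M * s ^ 2 / 2 := by
      have step : |∫ u in (0:ℝ)..s, u * f u| ≤ ∫ u in (0:ℝ)..s, |u * f u| := by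
        have := intervalIntegral.norm_integral_le_integral_norm
          (f := fun u => u * f u) (μ := MeasureTheory.volume) hs0
        simpa only [Real.norm_eq_abs] using this
      have mono : (∫ u in (0:ℝ)..s, |u * f u|) ≤ ∫ u in (0:ℝ)..s, M * u := by
        apply intervalIntegral.integral_mono_on hs0
          ((continuous_id'.mul hfc).abs.intervalIntegrable 0 s)
          ((continuous_const.mul continuous_id').intervalIntegrable 0 s)
        intro u hu
        show |u * f u| ≤ M * u
        rw [abs_mul, abs_of_nonneg hu.1]
        exact (mul_le_mul_of_nonneg_left (hMle u ⟨hu.1, le_trans hu.2 hsΔ⟩) hu.1).trans_eq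
          (mul_comm _ _)
      have hval : (∫ u in (0:ℝ)..s, M * u) = M * s ^ 2 / 2 := by
        rw [intervalIntegral.integral_const_mul]
        simp [integral_id]
        ring
      linarith [step, mono, hval.le]
    have B2 : |∫ u in s..Δt, (u - Δt) * f u| ≤ M * (Δt - s) ^ 2 / 2 := by
      have step : |∫ u in s..Δt, (u - Δt) * f u| ≤ ∫ u in s..Δt, |(u - Δt) * f u| := by
        have := intervalIntegral.norm_integral_le_integral_norm
          (f := fun u => (u - Δt) * f u) (μ := MeasureTheory.volume) hsΔ
        simpa only [Real.norm_eq_abs] using this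
      have mono : (∫ u in s..Δt, |(u - Δt) * f u|) ≤ ∫ u in s..Δt, M * (Δt - u) := by
        apply intervalIntegral.integral_mono_on hsΔ
          (((continuous_id'.sub continuous_const).mul hfc).abs.intervalIntegrable s Δt)
          ((continuous_const.mul (continuous_const.sub continuous_id')).intervalIntegrable s Δt)
        intro u hu
        show |(u - Δt) * f u| ≤ M * (Δt - u)
        rw [abs_mul, abs_sub_comm, abs_of_nonneg (by linarith [hu.2] : (0:ℝ) ≤ Δt - u)]
        exact (mul_le_mul_of_nonneg_left (hMle u ⟨le_trans hs0 hu.1, hu.2⟩)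
          (by linarith [hu.2] : (0:ℝ) ≤ Δt - u)).trans_eq (mul_comm _ _)
      have hval : (∫ u in s..Δt, M * (Δt - u)) = M * (Δt - s) ^ 2 / 2 := by
        have hinner : (∫ u in s..Δt, (Δt - u)) = (Δt - s) ^ 2 / 2 := by
          rw [intervalIntegral.integral_comp_sub_left (fun x => x) Δt]
          simp [integral_id]
        rw [intervalIntegral.integral_const_mul, hinner]
        ring
      linarith [step, mono, hval.le]
    calc |g s| ≤ ((Δt - s)/Δt) * (M * s ^ 2 / 2) + (s/Δt) * (M * (Δt - s) ^ 2 / 2) := by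
          rw [hgrep]
          refine le_trans (abs_add_le _ _) (add_le_add ?_ ?_)
          · rw [abs_mul, abs_neg,
              abs_of_nonneg (div_nonneg (by linarith : (0:ℝ) ≤ Δt - s) hΔt.le)]
            exact mul_le_mul_of_nonneg_left B1 (div_nonneg (by linarith) hΔt.le)
          · rw [abs_mul, abs_of_nonneg (div_nonneg hs0 hΔt.le)]
            exact mul_le_mul_of_nonneg_left B2 (div_nonneg hs0 hΔt.le)
      _ ≤ M * Δt ^ 2 / 8 := by
          rw [div_mul_eq_mul_div, div_mul_eq_mul_div, ← add_div, div_le_iff₀ hΔt]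
          nlinarith [mul_nonneg (mul_nonneg hM0 hΔt.le) (sq_nonneg (2*s - Δt))]
  -- integration by parts
  set E := fun s : ℝ => Real.exp (-α * (Δt - s) / (1 - α)) with hE_def
  have hE' : ∀ s : ℝ, HasDerivAt E (α / (1 - α) * E s) s := by
    intro s
    have inner : HasDerivAt (fun s : ℝ => -α * (Δt - s) / (1 - α)) (α / (1 - α)) s := by
      have : HasDerivAt (fun s : ℝ => -α * (Δt - s)) α s :=
        (((hasDerivAt_id s).const_sub Δt).const_mul (-α)).congr_deriv (by ring)
      exact this.div_const (1 - α)
    simpa [hE_def, mul_comm] using inner.exp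
  have hEc : Continuous E :=
    Real.continuous_exp.comp
      ((continuous_const.mul (continuous_const.sub continuous_id')).div_const _)
  have hgc : Continuous g :=
    (hd1.continuous).sub (continuous_const.add (continuous_const.mul continuous_id'))
  have hg'c : Continuous (fun s => deriv h s - m) := (hc1.continuous).sub continuous_const
  have IBP : (∫ s in (0:ℝ)..Δt, E s * (deriv h s - m))
      = E Δt * g Δt - E 0 * g 0 - ∫ s in (0:ℝ)..Δt, (α / (1 - α) * E s) * g s := by
    apply intervalIntegral.integral_mul_deriv_eq_deriv_mul
      (fun x _ => hE' x) (fun x _ => hg' x)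
      ((continuous_const.mul hEc).intervalIntegrable 0 Δt)
      (hg'c.intervalIntegrable 0 Δt)
  have hg0 : g 0 = 0 := by
    show h 0 - (h 0 + m * 0) = 0
    ring
  have hgΔ : g Δt = 0 := by
    show h Δt - (h 0 + m * Δt) = 0
    rw [hm_def]
    field_simp
    ring
  have hIBP2 : (∫ s in (0:ℝ)..Δt, E s * (deriv h s - m))
      = -(α / (1 - α)) * ∫ s in (0:ℝ)..Δt, E s * g s := by
    rw [IBP, hg0, hgΔ]
    rw [show (∫ s in (0:ℝ)..Δt, (α / (1 - α) * E s) * g s)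
        = α / (1 - α) * ∫ s in (0:ℝ)..Δt, E s * g s by
      rw [← intervalIntegral.integral_const_mul]; congr 1; ext s; ring]
    ring
  -- identify the integrand of the goal
  have hcongr : (∫ s in (0:ℝ)..Δt,
      deriv (fun t => h t - (h 0 + (h Δt - h 0) / Δt * t)) s *
        Real.exp (-α * (Δt - s) / (1 - α)))
      = ∫ s in (0:ℝ)..Δt, E s * (deriv h s - m) := by
    congr 1
    ext s
    rw [show deriv (fun t => h t - (h 0 + (h Δt - h 0) / Δt * t)) s = deriv h s - m from
      (hg' s).deriv]
    ring
  rw [hcongr, hIBP2]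
  -- final bound
  have hbnd : ‖∫ s in (0:ℝ)..Δt, E s * g s‖ ≤ M * Δt ^ 2 / 8 * |Δt - 0| := by
    apply intervalIntegral.norm_integral_le_of_norm_le_const
    intro x hx
    rw [Set.uIoc_of_le hΔt.le] at hx
    have hx' : x ∈ Set.Icc (0:ℝ) Δt := ⟨hx.1.le, hx.2⟩
    have hE1 : E x ≤ 1 := by
      rw [hE_def]
      simp only
      apply Real.exp_le_one_iff.mpr
      have : (0:ℝ) ≤ Δt - x := by linarith [hx.2]
      have : -α * (Δt - x) ≤ 0 := by nlinarith
      exact div_nonpos_of_nonpos_of_nonneg this h1α.le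
    have hE0 : 0 < E x := Real.exp_pos _
    calc ‖E x * g x‖ = E x * |g x| := by rw [Real.norm_eq_abs, abs_mul, abs_of_pos hE0]
      _ ≤ 1 * (M * Δt ^ 2 / 8) :=
          mul_le_mul hE1 (hgbound x hx') (abs_nonneg _) zero_le_one
      _ = M * Δt ^ 2 / 8 := one_mul _
  rw [abs_mul, abs_mul]
  rw [abs_of_pos (by positivity : (0:ℝ) < 1 / (1 - α)), abs_neg,
    abs_of_pos (by positivity : (0:ℝ) < α / (1 - α))]
  rw [Real.norm_eq_abs] at hbnd
  rw [sub_zero, abs_of_pos hΔt] at hbnd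
  calc 1 / (1 - α) * (α / (1 - α) * |∫ s in (0:ℝ)..Δt, E s * g s|)
      ≤ 1 / (1 - α) * (α / (1 - α) * (M * Δt ^ 2 / 8 * Δt)) := by
        apply mul_le_mul_of_nonneg_left (mul_le_mul_of_nonneg_left hbnd (by positivity))
          (by positivity)
    _ = α / (8 * (1 - α) ^ 2) * M * Δt ^ 3 := by field_simp
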